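/- arXiv:2310.00674 — 3 statements merged into one kernel-verified Lean document; each statement's English description precedes it below -/
import Mathlib

section
/- Let A > 0 and α < 0 satisfy −A < α. Then there exists θ ∈ (0,1), depending only on α and A, such that for every positive integer n and every finite sequence of real numbers a₁, …, aₙ with aᵢ ≥ −A for all 1 ≤ i ≤ n, if ∑_{i=1}^{n} aᵢ < α·n, then the number of indices k ∈ {1, …, n} with the property that ∑_{i=k−j+1}^{k} aᵢ ≤ (α/2)·j for every 1 ≤ j ≤ k is at least θ·n. -/
open Finset

private lemma pliss_icc_eq_ioc (m k : ℕ) : Icc (m+1) k = Ioc m k := by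
  ext x; simp [Nat.add_one_le_iff]

private lemma pliss_sum_split (a : ℕ → ℝ) (m k : ℕ) (h : m ≤ k) :
    ∑ i ∈ Icc 1 m, a i + ∑ i ∈ Icc (m+1) k, a i = ∑ i ∈ Icc 1 k, a i := by
  rw [show Icc 1 m = Ioc 0 m from pliss_icc_eq_ioc 0 m, pliss_icc_eq_ioc m k,
    show Icc 1 k = Ioc 0 k from pliss_icc_eq_ioc 0 k]
  exact Finset.sum_Ioc_consecutive a (Nat.zero_le m) h

open scoped Classical in
private lemma pliss_record_key (L : ℝ) (hL : 0 < L) (S : ℕ → ℝ) (hS0 : S 0 = 0)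
    (n : ℕ) (hstep : ∀ k, k < n → S k - L ≤ S (k+1)) :
    ∀ k, k ≤ n →
      -L * ((Icc 1 k).filter (fun k => ∀ m, m < k → S k ≤ S m)).card ≤ S k := by
  intro k
  induction k using Nat.strong_induction_on with
  | _ k ih =>
    intro hkn
    match k with
    | 0 => simp [hS0]
    | (k+1) =>
      by_cases hp : ∀ m, m < k + 1 → S (k+1) ≤ S m
      · have hins : Icc 1 (k+1) = insert (k+1) (Icc 1 k) := by
          ext x; simp only [mem_Icc, mem_insert]; omega
        rw [hins, filter_insert, if_pos hp,
          card_insert_of_notMem (by simp)]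
        have IH := ih k (Nat.lt_succ_self k) (by omega)
        have hstep' := hstep k (by omega)
        push_cast
        nlinarith [IH, hstep']
      · push_neg at hp
        obtain ⟨m, hm, hlt⟩ := hp
        have IH := ih m (by omega) (by omega)
        have hmono : ((Icc 1 m).filter (fun k => ∀ m, m < k → S k ≤ S m)).card ≤
            ((Icc 1 (k+1)).filter (fun k => ∀ m, m < k → S k ≤ S m)).card :=
          card_le_card (filter_subset_filter _ (Icc_subset_Icc_right (by omega)))
        have h1 : -L * ((Icc 1 (k+1)).filter (fun k => ∀ m, m < k → S k ≤ S m)).card ≤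
            -L * ((Icc 1 m).filter (fun k => ∀ m, m < k → S k ≤ S m)).card := by
          apply mul_le_mul_of_nonpos_left _ (by linarith)
          exact_mod_cast hmono
        linarith

open scoped Classical in
-- Sequence form of the Pliss lemma: abundance of (α/2)-hyperbolic times.
theorem pliss_hyperbolic_times (A α : ℝ) (hA : 0 < A) (hα : α < 0) (hAα : -A < α) :
    ∃ θ : ℝ, θ ∈ Set.Ioo (0 : ℝ) 1 ∧
      ∀ n : ℕ, 0 < n → ∀ a : ℕ → ℝ,
        (∀ i, 1 ≤ i → i ≤ n → -A ≤ a i) →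
        (∑ i ∈ Finset.Icc 1 n, a i) < α * n →
        θ * n ≤
          ((Finset.Icc 1 n).filter (fun k =>
            ∀ j, 1 ≤ j → j ≤ k →
              (∑ i ∈ Finset.Icc (k - j + 1) k, a i) ≤ (α / 2) * j)).card := by
  have hL : (0:ℝ) < A + α/2 := by linarith
  set L : ℝ := A + α/2 with hLdef
  set θ : ℝ := (-α/2) / L with hθdef
  have hθpos : 0 < θ := div_pos (by linarith) hL
  have hθlt : θ < 1 := by rw [hθdef, div_lt_one hL]; linarith
  refine ⟨θ, ⟨hθpos, hθlt⟩, ?_⟩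
  intro n hn a ha hsum
  set S : ℕ → ℝ := fun k => (∑ i ∈ Icc 1 k, a i) - (α/2)*k with hS
  have hstepS : ∀ k, S (k+1) = S k + (a (k+1) - α/2) := by
    intro k
    simp only [hS]
    rw [Finset.sum_Icc_succ_top (by omega : 1 ≤ k+1)]
    push_cast; ring
  have hequiv : ∀ k ∈ Icc 1 n,
      ((∀ j, 1 ≤ j → j ≤ k → (∑ i ∈ Icc (k - j + 1) k, a i) ≤ (α/2)*j) ↔
        (∀ m, m < k → S k ≤ S m)) := by
    intro k hk
    simp only [mem_Icc] at hk
    constructor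
    · intro h m hm
      have h1 := h (k - m) (by omega) (by omega)
      rw [show k - (k - m) + 1 = m + 1 by omega] at h1
      have hsplit := pliss_sum_split a m k (by omega)
      have hcast : ((k - m : ℕ) : ℝ) = (k : ℝ) - m := by
        have := Nat.cast_sub (by omega : m ≤ k) (R := ℝ); exact this
      rw [hcast] at h1
      simp only [hS]
      linarith
    · intro h j hj1 hjk
      have hm := h (k - j) (by omega)
      simp only [hS] at hm
      have hsplit := pliss_sum_split a (k - j) k (by omega)
      rw [show k - j + 1 = (k - j) + 1 from rfl]
      have hcast : ((k - j : ℕ) : ℝ) = (k : ℝ) - j := by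
        have := Nat.cast_sub hjk (R := ℝ); exact this
      rw [hcast] at hm
      linarith
  suffices hmain : θ * n ≤
      (((Icc 1 n).filter (fun k => ∀ m, m < k → S k ≤ S m)).card : ℝ) by
    convert hmain using 3
    ext k
    simp only [Finset.mem_filter, and_congr_right_iff]
    exact fun hk => hequiv k hk
  have hkey := pliss_record_key L hL S (by simp [hS]) n
    (fun k hk => by
      have hb := ha (k+1) (by omega) (by omega)
      have h2 := hstepS k
      rw [hLdef]
      linarith) n le_rfl
  have hSn : S n < (α/2) * n := by
    simp only [hS]
    have : (0:ℝ) < (n:ℝ) := by exact_mod_cast hn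
    nlinarith
  set c : ℕ := ((Icc 1 n).filter (fun k => ∀ m, m < k → S k ≤ S m)).card
  have h1 : -L * (c:ℝ) < (α/2) * n := lt_of_le_of_lt hkey hSn
  have hθL : θ * L = -α/2 := by
    rw [hθdef]; field_simp
  have hn' : (0:ℝ) < (n:ℝ) := by exact_mod_cast hn
  nlinarith [h1, hθL, hL, hn']
end

section
/- Let M be a compact metric space, f : M → M continuous, N a positive integer, and μ̂ a Borel probability measure on M. Set ν = (1/N)∑_{ℓ=0}^{N−1} (f^ℓ)_* μ̂. Then B(μ̂, f^N) ⊆ B(ν, f); that is, every point x ∈ M such that (1/n)∑_{j=0}^{n−1} φ(f^{jN}(x)) → ∫ φ dμ̂ for every continuous φ : M → ℝ also satisfies (1/n)∑_{i=0}^{n−1} φ(f^i(x)) → ∫ φ dν for every continuous φ : M → ℝ. -/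
open MeasureTheory Filter Topology
open scoped ENNReal

private lemma sum_range_mul_decomp (h : ℕ → ℝ) (N n : ℕ) :
    ∑ i ∈ Finset.range (n * N), h i
      = ∑ j ∈ Finset.range n, ∑ ℓ ∈ Finset.range N, h (j * N + ℓ) := by
  induction n with
  | zero => simp
  | succ n ih => rw [Finset.sum_range_succ, ← ih, Nat.succ_mul, Finset.sum_range_add]

private lemma aux_bound (nr mr Sn Sm C Nr : ℝ) (hm0 : 0 < mr) (hmn : mr ≤ nr)
    (hC0 : 0 ≤ C) (hSm : |Sm| ≤ mr * C)
    (hd : |Sn - Sm| ≤ (nr - mr) * C) (hNm : nr - mr ≤ Nr) :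
    |nr⁻¹ * Sn - mr⁻¹ * Sm| ≤ 2 * Nr * C / nr := by
  have hn0 : 0 < nr := hm0.trans_le hmn
  have key : nr⁻¹ * Sn - mr⁻¹ * Sm = nr⁻¹ * (Sn - Sm) + (nr⁻¹ - mr⁻¹) * Sm := by ring
  rw [key]
  have hinv : nr⁻¹ ≤ mr⁻¹ := inv_anti₀ hm0 hmn
  calc |nr⁻¹ * (Sn - Sm) + (nr⁻¹ - mr⁻¹) * Sm|
      ≤ |nr⁻¹ * (Sn - Sm)| + |(nr⁻¹ - mr⁻¹) * Sm| := abs_add_le _ _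
    _ = nr⁻¹ * |Sn - Sm| + (mr⁻¹ - nr⁻¹) * |Sm| := by
        rw [abs_mul, abs_mul, abs_of_pos (inv_pos.mpr hn0),
          abs_of_nonpos (sub_nonpos.mpr hinv), neg_sub]
    _ ≤ nr⁻¹ * (Nr * C) + (mr⁻¹ - nr⁻¹) * (mr * C) := by
        gcongr
        · exact hd.trans (mul_le_mul_of_nonneg_right hNm hC0)
    _ = Nr * C / nr + (nr - mr) * C / nr := by
        field_simp
    _ ≤ Nr * C / nr + Nr * C / nr := by gcongr
    _ = 2 * Nr * C / nr := by ring

-- The basin of μ̂ for f^N is contained in the basin of ν = (1/N) ∑_{ℓ<N} (f^ℓ)_* μ̂ for f.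
theorem basin_of_power_subset_basin
    {M : Type*} [MetricSpace M] [CompactSpace M] [MeasurableSpace M] [BorelSpace M]
    (f : M → M) (hf : Continuous f) (N : ℕ) (hN : 0 < N)
    (μhat : Measure M) [IsProbabilityMeasure μhat]
    (ν : Measure M)
    (hν : ν = (N : ℝ≥0∞)⁻¹ • ∑ ℓ ∈ Finset.range N, Measure.map (f^[ℓ]) μhat)
    (x : M)
    (hx : ∀ φ : C(M, ℝ),
      Tendsto (fun n : ℕ => (n : ℝ)⁻¹ * ∑ j ∈ Finset.range n, φ ((f^[N])^[j] x))
        atTop (𝓝 (∫ z, φ z ∂μhat))) :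
    ∀ φ : C(M, ℝ),
      Tendsto (fun n : ℕ => (n : ℝ)⁻¹ * ∑ i ∈ Finset.range n, φ (f^[i] x))
        atTop (𝓝 (∫ z, φ z ∂ν)) := by
  intro φ
  -- the limit value
  have hL : ∫ z, φ z ∂ν
      = (N : ℝ)⁻¹ * ∑ ℓ ∈ Finset.range N, ∫ z, φ (f^[ℓ] z) ∂μhat := by
    have hint : ∀ ℓ, Integrable φ (Measure.map (f^[ℓ]) μhat) := by
      intro ℓ
      have : IsProbabilityMeasure (Measure.map (f^[ℓ]) μhat) :=
        Measure.isProbabilityMeasure_map (hf.iterate ℓ).measurable.aemeasurable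
      exact (BoundedContinuousFunction.mkOfCompact φ).integrable _
    rw [hν, integral_smul_measure, integral_finset_sum_measure (fun ℓ _ => hint ℓ)]
    simp only [smul_eq_mul]
    congr 1
    · simp
    · exact Finset.sum_congr rfl fun ℓ _ => integral_map
        (hf.iterate ℓ).measurable.aemeasurable φ.continuous.measurable.aestronglyMeasurable
  set S : ℕ → ℝ := fun n => ∑ i ∈ Finset.range n, φ (f^[i] x) with hSdef
  set A : ℕ → ℝ := fun n => (n : ℝ)⁻¹ * S n with hAdef
  -- convergence along each residue class
  have hres : ∀ ℓ, Tendsto (fun n : ℕ => (n : ℝ)⁻¹ *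
      ∑ j ∈ Finset.range n, φ (f^[j * N + ℓ] x)) atTop (𝓝 (∫ z, φ (f^[ℓ] z) ∂μhat)) := by
    intro ℓ
    have h := hx (φ.comp ⟨f^[ℓ], hf.iterate ℓ⟩)
    have heq : ∀ j : ℕ, φ (f^[ℓ] ((f^[N])^[j] x)) = φ (f^[j * N + ℓ] x) := by
      intro j
      rw [← Function.iterate_mul, ← Function.iterate_add_apply, Nat.add_comm, Nat.mul_comm]
    simpa only [ContinuousMap.comp_apply, ContinuousMap.coe_mk, heq] using h
  -- convergence of A along the subsequence of multiples of N
  have hAsub : Tendsto (fun n : ℕ => A (n * N)) atTop (𝓝 (∫ z, φ z ∂ν)) := by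
    have h := (Filter.Tendsto.const_mul ((N : ℝ)⁻¹)
      (tendsto_finset_sum (Finset.range N) (fun ℓ _ => hres ℓ)))
    rw [← hL] at h
    refine h.congr fun n => ?_
    simp only [hAdef, hSdef]
    rw [sum_range_mul_decomp (fun i => φ (f^[i] x)) N n, Finset.sum_comm,
      ← Finset.mul_sum]
    push_cast
    rw [mul_inv]
    ring
  -- convergence of A along n ↦ (n / N) * N
  have hdiv : Tendsto (fun n : ℕ => n / N) atTop atTop := by
    apply tendsto_atTop_atTop.mpr
    intro b
    exact ⟨b * N, fun n hn => (Nat.le_div_iff_mul_le hN).mpr hn⟩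
  have hB : Tendsto (fun n : ℕ => A (n / N * N)) atTop (𝓝 (∫ z, φ z ∂ν)) :=
    hAsub.comp hdiv
  -- bound on the sums
  set C : ℝ := ‖φ‖ with hCdef
  have hC0 : 0 ≤ C := norm_nonneg _
  have hC : ∀ y, |φ y| ≤ C := fun y => by
    simpa [Real.norm_eq_abs] using φ.norm_coe_le_norm y
  have hSb : ∀ k, |S k| ≤ k * C := by
    intro k
    calc |S k| ≤ ∑ i ∈ Finset.range k, |φ (f^[i] x)| := Finset.abs_sum_le_sum_abs _ _
      _ ≤ ∑ _i ∈ Finset.range k, C := Finset.sum_le_sum fun i _ => hC _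
      _ = k * C := by simp [mul_comm]
  -- the difference A n - A (n/N*N) tends to 0
  have hdiff : Tendsto (fun n : ℕ => A n - A (n / N * N)) atTop (𝓝 0) := by
    apply squeeze_zero_norm' (a := fun n : ℕ => 2 * N * C / n)
    · filter_upwards [eventually_ge_atTop N] with n hn
      set m : ℕ := n / N * N with hmdef
      have hmn : m ≤ n := Nat.div_mul_le_self n N
      have hm1 : N ≤ m := by
        have h1 : 1 ≤ n / N := (Nat.le_div_iff_mul_le hN).mpr (by simpa using hn)
        calc N = 1 * N := (one_mul N).symm
          _ ≤ n / N * N := Nat.mul_le_mul_right N h1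
      have hnmN : n - m < N := by
        have h1 : N * (n / N) = m := by rw [hmdef, Nat.mul_comm]
        have h2 := Nat.div_add_mod n N
        have h3 := Nat.mod_lt n hN
        omega
      have hd : |S n - S m| ≤ ((n : ℝ) - (m : ℝ)) * C := by
        have hsub : S n - S m = ∑ i ∈ Finset.Ico m n, φ (f^[i] x) :=
          (Finset.sum_Ico_eq_sub _ hmn).symm
        rw [hsub]
        calc |∑ i ∈ Finset.Ico m n, φ (f^[i] x)|
            ≤ ∑ i ∈ Finset.Ico m n, |φ (f^[i] x)| := Finset.abs_sum_le_sum_abs _ _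
          _ ≤ ∑ _i ∈ Finset.Ico m n, C := Finset.sum_le_sum fun i _ => hC _
          _ = ((n - m : ℕ) : ℝ) * C := by simp [Nat.card_Ico, mul_comm]
          _ = ((n : ℝ) - (m : ℝ)) * C := by rw [Nat.cast_sub hmn]
      have hNm : (n : ℝ) - (m : ℝ) ≤ (N : ℝ) := by
        have : ((n - m : ℕ) : ℝ) ≤ (N : ℝ) := by exact_mod_cast hnmN.le
        rwa [Nat.cast_sub hmn] at this
      have hm0 : (0 : ℝ) < (m : ℝ) := by
        have : 0 < m := lt_of_lt_of_le hN hm1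
        exact_mod_cast this
      have hmnr : (m : ℝ) ≤ (n : ℝ) := by exact_mod_cast hmn
      have := aux_bound (n : ℝ) (m : ℝ) (S n) (S m) C (N : ℝ)
        hm0 hmnr hC0 (hSb m) hd hNm
      simpa [hAdef, Real.norm_eq_abs] using this
    · exact tendsto_const_div_atTop_nhds_zero_nat _
  have hfin := hdiff.add hB
  rw [zero_add] at hfin
  refine hfin.congr fun n => ?_
  ring
end

section
/- Let M be a compact metric space, f : M → M continuous, φ : M → ℝ continuous, and α < 0. Then there exist σ < 0 and β ∈ (0,1) such that for every x ∈ M the following holds: if there exist a Borel probability measure μ that is a weak* cluster point of the empirical measures ((1/n)∑_{i=0}^{n−1} δ_{f^i(x)})_{n≥1} with ∫ φ dμ < α, and an open set U ⊆ M with μ(U) > β, then limsup_{n→∞} (1/n)·#{ k ∈ {1, …, n} : f^k(x) ∈ U and ∑_{i=k−j+1}^{k} φ(f^i(x)) ≤ σ·j for every 1 ≤ j ≤ k } > 0. -/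
open MeasureTheory Filter Topology
open scoped ENNReal

private lemma sum_Icc_one_split (b : ℕ → ℝ) {m k : ℕ} (h : m ≤ k) :
    ∑ i ∈ Finset.Icc 1 k, b i
      = (∑ i ∈ Finset.Icc 1 m, b i) + ∑ i ∈ Finset.Icc (m + 1) k, b i := by
  rw [← Finset.Ico_add_one_right_eq_Icc 1 k, ← Finset.Ico_add_one_right_eq_Icc 1 m, ← Finset.Ico_add_one_right_eq_Icc (m + 1) k]
  exact (Finset.sum_Ico_consecutive _ (by omega) (by omega)).symm

private lemma sum_Icc_eq (h : ℕ → ℝ) (N : ℕ) :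
    ∑ i ∈ Finset.Icc 1 N, h i = (∑ i ∈ Finset.range N, h i) + h N - h 0 := by
  have h1 : Finset.range (N + 1) = insert 0 (Finset.Icc 1 N) := by
    ext i; simp [Finset.mem_range, Finset.mem_Icc]; omega
  have h2 : ∑ i ∈ Finset.range (N + 1), h i = h 0 + ∑ i ∈ Finset.Icc 1 N, h i := by
    rw [h1, Finset.sum_insert (by simp)]
  rw [Finset.sum_range_succ] at h2
  linarith

open scoped Classical in
private lemma pliss (a : ℕ → ℝ) (N : ℕ) (σ c B : ℝ) (hB : 0 < B)
    (hlow : ∀ i, 1 ≤ i → i ≤ N → -B ≤ a i - σ)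
    (hsum : ∑ i ∈ Finset.Icc 1 N, a i ≤ c * N)
    (s : Finset ℕ)
    (hs : ∀ k, k ∈ s ↔ k ∈ Finset.Icc 1 N ∧ ∀ j, 1 ≤ j → j ≤ k →
      (∑ i ∈ Finset.Icc (k - j + 1) k, a i) ≤ σ * j) :
    (σ - c) * N / B ≤ (s.card : ℝ) := by
  set P : ℕ → Prop := fun k => ∀ j, 1 ≤ j → j ≤ k →
      (∑ i ∈ Finset.Icc (k - j + 1) k, a i) ≤ σ * j with hP
  have hseq : s = (Finset.Icc 1 N).filter P := by
    ext k
    rw [hs k, Finset.mem_filter]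
  set S : ℕ → ℝ := fun m => ∑ i ∈ Finset.Icc 1 m, (a i - σ) with hS
  have key : ∀ k j : ℕ, 1 ≤ j → j ≤ k →
      ((∑ i ∈ Finset.Icc (k - j + 1) k, a i) ≤ σ * j ↔ S k ≤ S (k - j)) := by
    intro k j hj1 hjk
    have hm : k - j ≤ k := Nat.sub_le _ _
    have hsplit := sum_Icc_one_split (fun i => a i - σ) hm
    have hcard : (Finset.Icc (k - j + 1) k).card = j := by
      rw [Nat.card_Icc]; omega
    have hsum2 : ∑ i ∈ Finset.Icc (k - j + 1) k, (a i - σ)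
        = (∑ i ∈ Finset.Icc (k - j + 1) k, a i) - σ * j := by
      rw [Finset.sum_sub_distrib, Finset.sum_const, hcard, nsmul_eq_mul]
      ring
    have hrel : S k = S (k - j) + ((∑ i ∈ Finset.Icc (k - j + 1) k, a i) - σ * j) := by
      rw [hS]; simp only
      rw [hsplit, hsum2]
    constructor <;> intro h <;> linarith
  have main : ∀ n, n ≤ N → ∀ m, m ≤ n →
      -B * (((Finset.Icc 1 n).filter P).card : ℝ) ≤ S m := by
    intro n
    induction n with
    | zero =>
      intro _ m hm
      interval_cases m
      simp [hS]
    | succ n ih =>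
      intro hn m hm
      have hnN : n ≤ N := by omega
      have hcard_mono : (((Finset.Icc 1 n).filter P).card : ℝ)
          ≤ (((Finset.Icc 1 (n + 1)).filter P).card : ℝ) := by
        exact_mod_cast Finset.card_le_card (Finset.filter_subset_filter _ (by
          intro i hi
          simp only [Finset.mem_Icc] at hi ⊢
          omega))
      rcases Nat.lt_or_ge m (n + 1) with hm' | hm'
      · have h1 := ih hnN m (by omega)
        nlinarith
      · have hm'' : m = n + 1 := by omega
        subst hm''
        have hins : Finset.Icc 1 (n + 1) = insert (n + 1) (Finset.Icc 1 n) := by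
          ext i
          simp only [Finset.mem_Icc, Finset.mem_insert]
          omega
        by_cases hPn : P (n + 1)
        · have hnotmem : (n + 1) ∉ (Finset.Icc 1 n).filter P := fun h =>
            absurd (Finset.mem_Icc.mp (Finset.mem_of_mem_filter _ h)).2 (by omega)
          have hc : (((Finset.Icc 1 (n + 1)).filter P).card : ℝ)
              = ((Finset.Icc 1 n).filter P).card + 1 := by
            rw [hins, Finset.filter_insert, if_pos hPn,
              Finset.card_insert_of_notMem hnotmem]
            push_cast; ring
          have hSn := ih hnN n le_rfl
          have hstep : S (n + 1) = S n + (a (n + 1) - σ) := by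
            rw [hS]; simp only
            rw [← Finset.Ico_add_one_right_eq_Icc 1 (n + 1), Finset.sum_Ico_succ_top (by omega),
              Finset.Ico_add_one_right_eq_Icc]
          have hl := hlow (n + 1) (by omega) hn
          rw [hc]
          linarith
        · have hc : ((Finset.Icc 1 (n + 1)).filter P).card
              = ((Finset.Icc 1 n).filter P).card := by
            rw [hins, Finset.filter_insert, if_neg hPn]
          have hPn' : ∃ j, 1 ≤ j ∧ j ≤ n + 1 ∧
              σ * j < ∑ i ∈ Finset.Icc (n + 1 - j + 1) (n + 1), a i := by
            by_contra hcon
            push_neg at hcon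
            exact hPn fun j hj1 hj2 => hcon j hj1 hj2
          obtain ⟨j, hj1, hjk, hgt⟩ := hPn'
          have hkey := key (n + 1) j hj1 hjk
          have hlt : S (n + 1 - j) < S (n + 1) := by
            by_contra hcon
            push_neg at hcon
            exact absurd (hkey.mpr hcon) (not_le.mpr hgt)
          have hihm := ih hnN (n + 1 - j) (by omega)
          rw [hc]
          linarith
  have hmain := main N le_rfl N le_rfl
  have hcardN : (Finset.Icc 1 N).card = N := by rw [Nat.card_Icc]; omega
  have hSN : S N ≤ (c - σ) * N := by
    have hSN' : S N = (∑ i ∈ Finset.Icc 1 N, a i) - σ * N := by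
      rw [hS]; simp only
      rw [Finset.sum_sub_distrib, Finset.sum_const, hcardN, nsmul_eq_mul]
      ring
    rw [hSN']
    linarith
  rw [hseq, div_le_iff₀ hB]
  nlinarith

open scoped Classical in
theorem hyperbolic_entrance_times_positive_frequency
    {M : Type*} [MetricSpace M] [CompactSpace M] [MeasurableSpace M] [BorelSpace M]
    (f : M → M) (hf : Continuous f) (φ : M → ℝ) (hφ : Continuous φ)
    (α : ℝ) (hα : α < 0) :
    ∃ σ : ℝ, σ < 0 ∧ ∃ β : ℝ, β ∈ Set.Ioo (0 : ℝ) 1 ∧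
      ∀ x : M, ∀ μ : Measure M, IsProbabilityMeasure μ →
        (∃ n : ℕ → ℕ, StrictMono n ∧
          ∀ g : C(M, ℝ),
            Tendsto (fun k => ((n k : ℝ))⁻¹ * ∑ i ∈ Finset.range (n k), g (f^[i] x))
              atTop (𝓝 (∫ z, g z ∂μ))) →
        (∫ z, φ z ∂μ) < α →
        ∀ U : Set M, IsOpen U → ENNReal.ofReal β < μ U →
        0 < atTop.limsup (fun n : ℕ =>
          (n : ℝ)⁻¹ * ((Finset.Icc 1 n).filter (fun k =>
            f^[k] x ∈ U ∧ ∀ j, 1 ≤ j → j ≤ k →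
              (∑ i ∈ Finset.Icc (k - j + 1) k, φ (f^[i] x)) ≤ σ * j)).card) := by
  obtain ⟨C, hC0, hC⟩ : ∃ C : ℝ, 0 ≤ C ∧ ∀ z, |φ z| ≤ C := by
    obtain ⟨C, hCb⟩ := (isCompact_range hφ.norm).bddAbove
    refine ⟨max C 0, le_max_right _ _, fun z => le_max_of_le_left ?_⟩
    have := hCb (Set.mem_range_self (f := fun z => ‖φ z‖) z)
    simpa [Real.norm_eq_abs] using this
  obtain ⟨σ, hσdef⟩ : ∃ t : ℝ, t = α / 2 := ⟨_, rfl⟩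
  obtain ⟨B, hBdef⟩ : ∃ t : ℝ, t = C + 1 - α := ⟨_, rfl⟩
  obtain ⟨c, hcdef⟩ : ∃ t : ℝ, t = 3 * α / 4 := ⟨_, rfl⟩
  obtain ⟨θ, hθdef⟩ : ∃ t : ℝ, t = (σ - c) / B := ⟨_, rfl⟩
  have hB : 0 < B := by rw [hBdef]; linarith
  have hσ : σ < 0 := by rw [hσdef]; linarith
  have hσc : c < σ := by rw [hσdef, hcdef]; linarith
  have hθpos : 0 < θ := by rw [hθdef]; exact div_pos (by linarith) hB
  have hθlt1 : θ < 1 := by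
    rw [hθdef, div_lt_one hB, hσdef, hcdef, hBdef]; linarith
  obtain ⟨β, hβdef⟩ : ∃ t : ℝ, t = 1 - θ / 2 := ⟨_, rfl⟩
  refine ⟨σ, hσ, β, ⟨by rw [hβdef]; linarith, by rw [hβdef]; linarith⟩, ?_⟩
  intro x μ hμ hcv hint U hUopen hUμ
  obtain ⟨n, hn, hconv⟩ := hcv
  -- inner regularity: a closed (hence compact) F ⊆ U with μ F > β
  obtain ⟨F, hFU, hFclosed, hFμ⟩ := hUopen.exists_lt_isClosed hUμ
  have hFK : IsCompact F := hFclosed.isCompact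
  -- Urysohn function
  obtain ⟨g0, hg0F, hg0U, hg01⟩ :=
    exists_continuous_zero_one_of_isCompact hFK hUopen.isClosed_compl
      (Set.disjoint_left.mpr fun z hz hz' => hz' (hFU hz))
  set g : C(M, ℝ) := 1 - g0 with hgdef
  have hgF : ∀ z ∈ F, g z = 1 := by
    intro z hz
    have := hg0F hz
    simp only [Pi.zero_apply] at this
    simp [hgdef, this]
  have hgU : ∀ z, z ∉ U → g z = 0 := by
    intro z hz
    have := hg0U (by simpa using hz : z ∈ Uᶜ)
    simp only [Pi.one_apply] at this
    simp [hgdef, this]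
  have hg01' : ∀ z, g z ∈ Set.Icc (0 : ℝ) 1 := by
    intro z
    have h1 := (hg01 z).1
    have h2 := (hg01 z).2
    constructor <;> simp only [hgdef, ContinuousMap.sub_apply, ContinuousMap.one_apply] <;>
      linarith
  have hgint : Integrable (fun z => g z) μ :=
    g.continuous.integrable_of_hasCompactSupport (HasCompactSupport.of_compactSpace _)
  have hFmeas : MeasurableSet F := hFclosed.measurableSet
  have hβ0 : (0 : ℝ) ≤ β := by rw [hβdef]; linarith
  have hμFβ : β < (μ F).toReal :=
    (ENNReal.ofReal_lt_iff_lt_toReal hβ0 (measure_ne_top μ F)).mp hFμ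
  have hintg : (μ F).toReal ≤ ∫ z, g z ∂μ := by
    have h1 : ∫ z in F, g z ∂μ = (μ F).toReal := by
      rw [setIntegral_congr_fun hFmeas (fun z hz => hgF z hz)]
      simp [setIntegral_const, Measure.real]
    calc (μ F).toReal = ∫ z in F, g z ∂μ := h1.symm
      _ ≤ ∫ z, g z ∂μ :=
        setIntegral_le_integral hgint (Eventually.of_forall fun z => (hg01' z).1)
  have hnat : Tendsto (fun k => ((n k : ℝ))⁻¹) atTop (𝓝 0) :=
    tendsto_inv_atTop_nhds_zero_nat.comp hn.tendsto_atTop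
  have hφconv := hconv ⟨φ, hφ⟩
  simp only [ContinuousMap.coe_mk] at hφconv
  have hgconv := hconv g
  have E1 : ∀ᶠ k in atTop, 1 ≤ n k := hn.tendsto_atTop.eventually_ge_atTop 1
  -- correction term tends to 0
  have hcorr : Tendsto (fun k => ((n k : ℝ))⁻¹ * (φ (f^[n k] x) - φ x)) atTop (𝓝 0) := by
    apply squeeze_zero_norm (a := fun k => 2 * C * ((n k : ℝ))⁻¹)
    · intro k
      have hd : |φ (f^[n k] x) - φ x| ≤ 2 * C := by
        have h2 := abs_le.mp (hC (f^[n k] x))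
        have h3 := abs_le.mp (hC x)
        rw [abs_sub_le_iff]
        constructor <;> linarith
      calc ‖((n k : ℝ))⁻¹ * (φ (f^[n k] x) - φ x)‖
          = ((n k : ℝ))⁻¹ * |φ (f^[n k] x) - φ x| := by
            rw [norm_mul, Real.norm_eq_abs, Real.norm_eq_abs, abs_inv, Nat.abs_cast]
        _ ≤ ((n k : ℝ))⁻¹ * (2 * C) := by
            apply mul_le_mul_of_nonneg_left hd (by positivity)
        _ = 2 * C * ((n k : ℝ))⁻¹ := by ring
    · simpa using hnat.const_mul (2 * C)
  have hIccφ : Tendsto (fun k => ((n k : ℝ))⁻¹ * ∑ i ∈ Finset.Icc 1 (n k), φ (f^[i] x))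
      atTop (𝓝 (∫ z, φ z ∂μ)) := by
    have heq : (fun k => ((n k : ℝ))⁻¹ * ∑ i ∈ Finset.Icc 1 (n k), φ (f^[i] x))
        = fun k => (((n k : ℝ))⁻¹ * ∑ i ∈ Finset.range (n k), φ (f^[i] x))
            + ((n k : ℝ))⁻¹ * (φ (f^[n k] x) - φ x) := by
      funext k
      rw [sum_Icc_eq (fun i => φ (f^[i] x)) (n k)]
      simp only [Function.iterate_zero_apply]
      ring
    rw [heq]
    simpa using hφconv.add hcorr
  have E2 : ∀ᶠ k in atTop, (∑ i ∈ Finset.Icc 1 (n k), φ (f^[i] x)) ≤ c * (n k) := by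
    have hlt : ∫ z, φ z ∂μ < c := by rw [hcdef]; linarith
    filter_upwards [hIccφ.eventually_lt_const hlt, E1] with k hk hk1
    have hpos : (0 : ℝ) < (n k : ℝ) := by exact_mod_cast hk1
    have hne : ((n k : ℝ)) ≠ 0 := ne_of_gt hpos
    have := mul_lt_mul_of_pos_left hk hpos
    rw [← mul_assoc, mul_inv_cancel₀ hne, one_mul] at this
    nlinarith
  -- the two families of finsets
  set Bs : ℕ → Finset ℕ := fun N => (Finset.Icc 1 N).filter (fun k' =>
    ∀ j, 1 ≤ j → j ≤ k' →
      (∑ i ∈ Finset.Icc (k' - j + 1) k', φ (f^[i] x)) ≤ σ * j) with hBs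
  set A : ℕ → Finset ℕ := fun N => (Finset.Icc 1 N).filter (fun k' => f^[k'] x ∈ U) with hA
  -- Pliss lower bound on the number of hyperbolic times
  have E4 : ∀ᶠ k in atTop, θ * (n k) ≤ ((Bs (n k)).card : ℝ) := by
    filter_upwards [E2] with k hk
    have hp := pliss (fun i => φ (f^[i] x)) (n k) σ c B hB
      (fun i _ _ => by
        have := abs_le.mp (hC (f^[i] x))
        rw [hBdef, hσdef]
        linarith)
      hk (Bs (n k)) (fun k' => by rw [hBs]; simp [Finset.mem_filter])
    calc θ * (n k) = (σ - c) * (n k) / B := by rw [hθdef]; ring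
      _ ≤ _ := hp
  -- lower bound on the number of visits to U
  have hVsum : ∀ N : ℕ, (∑ i ∈ Finset.Icc 1 N, g (f^[i] x)) ≤ ((A N).card : ℝ) := by
    intro N
    have hcf : (((A N).card : ℕ) : ℝ)
        = ∑ i ∈ Finset.Icc 1 N, (if f^[i] x ∈ U then (1 : ℝ) else 0) := by
      rw [hA]
      simp only
      rw [Finset.card_filter]
      push_cast
      rfl
    rw [hcf]
    apply Finset.sum_le_sum
    intro i _
    by_cases hiU : f^[i] x ∈ U
    · rw [if_pos hiU]; exact (hg01' _).2
    · rw [if_neg hiU, hgU _ hiU]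
  have E3 : ∀ᶠ k in atTop, β * (n k) ≤ ((A (n k)).card : ℝ) := by
    obtain ⟨r, hr⟩ : ∃ t : ℝ, t = ∫ z, g z ∂μ := ⟨_, rfl⟩
    have hrβ : β < r := by rw [hr]; exact lt_of_lt_of_le hμFβ hintg
    obtain ⟨β', hβ'⟩ : ∃ t : ℝ, t = (β + r) / 2 := ⟨_, rfl⟩
    have hββ' : β < β' := by rw [hβ']; linarith
    have hβ'r : β' < r := by rw [hβ']; linarith
    have h1 : ∀ᶠ k in atTop,
        β' < ((n k : ℝ))⁻¹ * ∑ i ∈ Finset.range (n k), g (f^[i] x) := by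
      apply Tendsto.eventually_const_lt hβ'r
      rw [hr]
      exact hgconv
    have h2 : ∀ᶠ k in atTop, ((n k : ℝ))⁻¹ < β' - β :=
      hnat.eventually_lt_const (by linarith)
    filter_upwards [h1, h2, E1] with k hk1 hk2 hk3
    have hpos : (0 : ℝ) < (n k : ℝ) := by exact_mod_cast hk3
    have hne : ((n k : ℝ)) ≠ 0 := ne_of_gt hpos
    have hsum_range : β' * (n k) ≤ ∑ i ∈ Finset.range (n k), g (f^[i] x) := by
      have h := mul_lt_mul_of_pos_left hk1 hpos
      rw [← mul_assoc, mul_inv_cancel₀ hne, one_mul] at h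
      nlinarith
    have hone : (1 : ℝ) ≤ (β' - β) * (n k) := by
      have h := mul_lt_mul_of_pos_left hk2 hpos
      rw [mul_inv_cancel₀ hne] at h
      nlinarith
    have hIcc_ge : (∑ i ∈ Finset.range (n k), g (f^[i] x)) - 1
        ≤ ∑ i ∈ Finset.Icc 1 (n k), g (f^[i] x) := by
      rw [sum_Icc_eq (fun i => g (f^[i] x)) (n k)]
      simp only [Function.iterate_zero_apply]
      have h01 := hg01' (f^[n k] x)
      have h02 := hg01' x
      linarith [h01.1, h02.2]
    have hV := hVsum (n k)
    linarith
  -- combine the two estimates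
  have key2 : ∀ N : ℕ, 1 ≤ N → β * N ≤ ((A N).card : ℝ) → θ * N ≤ ((Bs N).card : ℝ) →
      ∀ T : Finset ℕ, (∀ k, k ∈ T ↔ k ∈ Finset.Icc 1 N ∧
        (f^[k] x ∈ U ∧ ∀ j, 1 ≤ j → j ≤ k →
          (∑ i ∈ Finset.Icc (k - j + 1) k, φ (f^[i] x)) ≤ σ * j)) →
      θ / 2 ≤ (N : ℝ)⁻¹ * (T.card : ℝ) := by
    intro N hN1 h3 h4 T hT
    have hTeq : T = A N ∩ Bs N := by
      ext k
      rw [hT k, hA, hBs]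
      simp only [Finset.mem_inter, Finset.mem_filter]
      tauto
    have hcardUI := Finset.card_union_add_card_inter (A N) (Bs N)
    have hsub : ((A N) ∪ (Bs N)).card ≤ N := by
      have hss : (A N) ∪ (Bs N) ⊆ Finset.Icc 1 N := by
        intro i hi
        rcases Finset.mem_union.mp hi with h | h
        · simp only [hA, Finset.mem_filter] at h
          exact h.1
        · simp only [hBs, Finset.mem_filter] at h
          exact h.1
      calc ((A N) ∪ (Bs N)).card ≤ (Finset.Icc 1 N).card := Finset.card_le_card hss
        _ = N := by rw [Nat.card_Icc]; omega
    have hpos : (0 : ℝ) < (N : ℝ) := by exact_mod_cast hN1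
    have hcast : (((A N) ∪ (Bs N)).card : ℝ) + (((A N) ∩ (Bs N)).card : ℝ)
        = ((A N).card : ℝ) + ((Bs N).card : ℝ) := by exact_mod_cast hcardUI
    have hsub' : ((((A N) ∪ (Bs N)).card : ℕ) : ℝ) ≤ (N : ℝ) := by exact_mod_cast hsub
    have hTcard : θ / 2 * N ≤ (((A N) ∩ (Bs N)).card : ℝ) := by
      rw [hβdef] at h3
      linarith
    rw [hTeq]
    calc θ / 2 = (N : ℝ)⁻¹ * (θ / 2 * N) := by field_simp
      _ ≤ (N : ℝ)⁻¹ * (((A N) ∩ (Bs N)).card : ℝ) :=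
        mul_le_mul_of_nonneg_left hTcard (by positivity)
  have Efin : ∀ᶠ k in atTop, θ / 2 ≤ (fun N : ℕ =>
      (N : ℝ)⁻¹ * ((Finset.Icc 1 N).filter (fun k =>
        f^[k] x ∈ U ∧ ∀ j, 1 ≤ j → j ≤ k →
          (∑ i ∈ Finset.Icc (k - j + 1) k, φ (f^[i] x)) ≤ σ * j)).card) (n k) := by
    filter_upwards [E3, E4, E1] with k h3 h4 h1
    exact key2 (n k) h1 h3 h4 _ (fun k' => by simp [Finset.mem_filter])
  have hfreq : ∃ᶠ N in atTop, θ / 2 ≤ (fun N : ℕ =>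
      (N : ℝ)⁻¹ * ((Finset.Icc 1 N).filter (fun k =>
        f^[k] x ∈ U ∧ ∀ j, 1 ≤ j → j ≤ k →
          (∑ i ∈ Finset.Icc (k - j + 1) k, φ (f^[i] x)) ≤ σ * j)).card) N :=
    hn.tendsto_atTop.frequently Efin.frequently
  have hbdd : IsBoundedUnder (· ≤ ·) atTop (fun N : ℕ =>
      (N : ℝ)⁻¹ * ((Finset.Icc 1 N).filter (fun k =>
        f^[k] x ∈ U ∧ ∀ j, 1 ≤ j → j ≤ k →
          (∑ i ∈ Finset.Icc (k - j + 1) k, φ (f^[i] x)) ≤ σ * j)).card) := by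
    refine ⟨1, eventually_map.mpr (Eventually.of_forall fun N => ?_)⟩
    rcases Nat.eq_zero_or_pos N with h0 | h0
    · subst h0; simp
    · have hpos : (0 : ℝ) < (N : ℝ) := by exact_mod_cast h0
      have hcard : (((Finset.Icc 1 N).filter (fun k =>
          f^[k] x ∈ U ∧ ∀ j, 1 ≤ j → j ≤ k →
            (∑ i ∈ Finset.Icc (k - j + 1) k, φ (f^[i] x)) ≤ σ * j)).card : ℝ) ≤ N := by
        have h1 := Finset.card_le_card (Finset.filter_subset (fun k =>
          f^[k] x ∈ U ∧ ∀ j, 1 ≤ j → j ≤ k →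
            (∑ i ∈ Finset.Icc (k - j + 1) k, φ (f^[i] x)) ≤ σ * j) (Finset.Icc 1 N))
        have h2 : (Finset.Icc 1 N).card = N := by rw [Nat.card_Icc]; omega
        rw [h2] at h1
        exact_mod_cast h1
      calc (N : ℝ)⁻¹ * _ ≤ (N : ℝ)⁻¹ * (N : ℝ) :=
            mul_le_mul_of_nonneg_left hcard (by positivity)
        _ = 1 := inv_mul_cancel₀ (ne_of_gt hpos)
  have hlim := le_limsup_of_frequently_le hfreq hbdd
  calc (0 : ℝ) < θ / 2 := by linarith
    _ ≤ _ := hlim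
end
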